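/- Let X and Y be random variables with distributions F and G, with F supported on all of ℝ and G satisfying G(0−)=0 and G(0)<1. Assume there is a bounded measurable function h : [0,∞) → (0,∞) with E[h(Y)] = 1 such that P[XY > x] ~ ∫₀^∞ h(y) F̄(x/y) G(dy) as x → ∞, and assume there is a function a(x) → ∞ with a(x)/x → 0 and Ḡ(a(x)) = o(H̄(x)), where H̄(x) = P[XY > x]. If F has positively decreasing tail, then H has positively decreasing tail. -/

import Mathlib

open Filter MeasureTheory Asymptotics Topology ProbabilityTheory

noncomputable def rtail {Ω : Type*} [MeasureSpace Ω] (Z : Ω → ℝ) (x : ℝ) : ℝ :=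
  (ℙ {ω | x < Z ω}).toReal

section aux

variable {Ω : Type*} [MeasureSpace Ω] [IsProbabilityMeasure (ℙ : Measure Ω)] (Z : Ω → ℝ)

lemma rtail_nonneg (x : ℝ) : 0 ≤ rtail Z x := ENNReal.toReal_nonneg

lemma rtail_le_one (x : ℝ) : rtail Z x ≤ 1 := by
  have := prob_le_one (μ := (ℙ : Measure Ω)) (s := {ω | x < Z ω})
  simpa [rtail] using ENNReal.toReal_mono ENNReal.one_ne_top this

lemma rtail_antitone : Antitone (rtail Z) := fun s t hst =>
  ENNReal.toReal_mono (measure_ne_top _ _)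
    (measure_mono fun ω hω => lt_of_le_of_lt hst hω)

lemma rtail_measurable : Measurable (rtail Z) := (rtail_antitone Z).measurable

end aux

/-- under the weak-dependence product representation and the truncation
condition, positive decrease of `F` transfers to the product distribution `H`. -/
theorem stmt4 {Ω : Type*} [MeasureSpace Ω] [IsProbabilityMeasure (ℙ : Measure Ω)]
    (X Y : Ω → ℝ) (hY : Measurable Y)
    (hFpos : ∀ x : ℝ, 0 < rtail X x)
    (hGneg : ℙ {ω | Y ω < 0} = 0) (hG0 : ℙ {ω | Y ω ≤ 0} < 1)
    (h : ℝ → ℝ) (K : ℝ) (hmeas : Measurable h)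
    (hhpos : ∀ y, 0 < h y) (hbdd : ∀ y, h y ≤ K)
    (hmean : ∫ y, h y ∂(Measure.map Y ℙ) = 1)
    (hprod : Tendsto (fun x => rtail (fun ω => X ω * Y ω) x /
        ∫ y in Set.Ioi (0:ℝ), h y * rtail X (x / y) ∂(Measure.map Y ℙ)) atTop (𝓝 1))
    (a : ℝ → ℝ) (ha1 : Tendsto a atTop atTop)
    (ha2 : Tendsto (fun x => a x / x) atTop (𝓝 0))
    (ha3 : (fun x => rtail Y (a x)) =o[atTop] rtail (fun ω => X ω * Y ω))
    (hPD : ∀ v : ℝ, 1 < v → limsup (fun x => rtail X (v * x) / rtail X x) atTop < 1) :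
    ∀ v : ℝ, 1 < v →
      limsup (fun x => rtail (fun ω => X ω * Y ω) (v * x) /
        rtail (fun ω => X ω * Y ω) x) atTop < 1 := by
  intro v hv
  have hv0 : (0:ℝ) < v := by linarith
  set μ : Measure ℝ := Measure.map Y ℙ with hμdef
  have hμprob : IsProbabilityMeasure μ := Measure.isProbabilityMeasure_map hY.aemeasurable
  set T : ℝ → ℝ := rtail (fun ω => X ω * Y ω) with hTdef
  set I : ℝ → ℝ := fun x => ∫ y in Set.Ioi (0:ℝ), h y * rtail X (x / y) ∂μ with hIdef
  have hT_nonneg : ∀ x, 0 ≤ T x := fun x => rtail_nonneg _ x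
  -- constants
  have hK0 : 0 < K := lt_of_lt_of_le (hhpos 0) (hbdd 0)
  set c : ℝ := limsup (fun x => rtail X (v * x) / rtail X x) atTop with hcdef
  have hc1 : c < 1 := hPD v hv
  set c' : ℝ := max ((c + 1) / 2) (1 / 2) with hc'def
  have hc'lt1 : c' < 1 := max_lt (by linarith) (by norm_num)
  have hc'pos : 0 < c' := lt_of_lt_of_le (by norm_num) (le_max_right _ _)
  have hcc' : c < c' := lt_max_of_lt_left (by linarith)
  set ε : ℝ := (1 - c') / 8 with hεdef
  have hε0 : 0 < ε := by simp only [hεdef]; linarith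
  have hε1 : ε < 1 := by simp only [hεdef]; linarith
  set B1 : ℝ := (1 + ε) * c' / (1 - ε) with hB1def
  have hB1pos : 0 < B1 := by
    apply div_pos (by positivity) (by linarith)
  have hB1lt1 : B1 < 1 := by
    rw [hB1def, div_lt_one (by linarith)]
    simp only [hεdef]; nlinarith
  set δ : ℝ := (1 - B1) / (2 * K * (1 + ε)) with hδdef
  have hδ0 : 0 < δ := by apply div_pos (by linarith) (by positivity)
  set B : ℝ := (1 + B1) / 2 with hBdef
  have hBlt1 : B < 1 := by simp only [hBdef]; linarith
  -- measurability and integrability of the integrand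
  have hgmeas : ∀ x : ℝ, Measurable fun y : ℝ => h y * rtail X (x / y) := fun x =>
    hmeas.mul ((rtail_measurable X).comp (measurable_const.div measurable_id))
  have hg_nonneg : ∀ x y : ℝ, 0 ≤ h y * rtail X (x / y) := fun x y =>
    mul_nonneg (hhpos y).le (rtail_nonneg X _)
  have hg_le : ∀ x y : ℝ, h y * rtail X (x / y) ≤ K := fun x y => by
    calc h y * rtail X (x / y) ≤ K * 1 :=
          mul_le_mul (hbdd y) (rtail_le_one X _) (rtail_nonneg X _) hK0.le
      _ = K := mul_one K
  have hgint : ∀ (x : ℝ) (s : Set ℝ), IntegrableOn (fun y => h y * rtail X (x / y)) s μ := by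
    intro x s
    refine Integrable.mono' (integrable_const K) ((hgmeas x).aestronglyMeasurable) ?_
    exact Filter.Eventually.of_forall fun y => by
      rw [Real.norm_eq_abs, abs_of_nonneg (hg_nonneg x y)]; exact hg_le x y
  -- positivity of I
  have hμIoi : 0 < μ (Set.Ioi (0:ℝ)) := by
    rw [hμdef, Measure.map_apply hY measurableSet_Ioi]
    have hcompl : Y ⁻¹' Set.Ioi (0:ℝ) = (Y ⁻¹' Set.Iic (0:ℝ))ᶜ := by
      ext ω; simp [not_le]
    rw [hcompl, prob_compl_eq_one_sub (hY measurableSet_Iic)]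
    exact tsub_pos_of_lt hG0
  have hI_pos : ∀ x, 0 < I x := by
    intro x
    rw [hIdef]
    rw [setIntegral_pos_iff_support_of_nonneg_ae
      (Filter.Eventually.of_forall fun y => hg_nonneg x y) (hgint x _)]
    have hsupp : Function.support (fun y => h y * rtail X (x / y)) = Set.univ := by
      ext y; simp only [Function.mem_support, Set.mem_univ, iff_true]
      exact ne_of_gt (mul_pos (hhpos y) (hFpos _))
    rw [hsupp, Set.univ_inter]
    exact hμIoi
  -- rtail Y via μ
  have hrtailY : ∀ t : ℝ, rtail Y t = (μ (Set.Ioi t)).toReal := by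
    intro t
    rw [hμdef, Measure.map_apply hY measurableSet_Ioi]
    rfl
  -- F positively decreasing: eventual bound
  have hFratio_bdd : IsBoundedUnder (· ≤ ·) atTop (fun x => rtail X (v * x) / rtail X x) := by
    apply isBoundedUnder_of_eventually_le (a := 1)
    filter_upwards [eventually_ge_atTop (0:ℝ)] with t ht
    rw [div_le_one (hFpos t)]
    exact rtail_antitone X (le_mul_of_one_le_left ht hv.le)
  have hFev : ∀ᶠ t in atTop, rtail X (v * t) ≤ c' * rtail X t := by
    filter_upwards [eventually_lt_of_limsup_lt hcc' hFratio_bdd] with t ht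
    exact le_of_lt ((div_lt_iff₀ (hFpos t)).mp ht)
  obtain ⟨t₀, ht₀⟩ := hFev.exists_forall_of_atTop
  -- x / a x → ∞
  have hax_pos : ∀ᶠ x in atTop, 0 < a x := ha1.eventually (eventually_gt_atTop 0)
  have hxa : Tendsto (fun x => x / a x) atTop atTop := by
    have h1 : Tendsto (fun x => a x / x) atTop (𝓝[>] (0:ℝ)) := by
      apply tendsto_nhdsWithin_of_tendsto_nhds_of_eventually_within _ ha2
      filter_upwards [hax_pos, eventually_gt_atTop (0:ℝ)] with x h1 h2
      exact div_pos h1 h2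
    have := h1.inv_tendsto_nhdsGT_zero
    refine this.congr fun x => ?_
    simp only [Pi.inv_apply, inv_div]
  -- tendsto of T(vx)/I(vx)
  have hprodv : Tendsto (fun x => T (v * x) / I (v * x)) atTop (𝓝 1) :=
    hprod.comp (Tendsto.const_mul_atTop hv0 tendsto_id)
  have hE1 : ∀ᶠ x in atTop, T (v * x) ≤ (1 + ε) * I (v * x) := by
    filter_upwards [hprodv.eventually (eventually_le_nhds (by linarith : (1:ℝ) < 1 + ε))] with x hx
    exact ((div_le_iff₀ (hI_pos (v * x))).mp hx)
  have hE2 : ∀ᶠ x in atTop, (1 - ε) * I x ≤ T x := by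
    filter_upwards [hprod.eventually (eventually_ge_nhds (by linarith : 1 - ε < (1:ℝ)))] with x hx
    exact (le_div_iff₀ (hI_pos x)).mp hx
  have hE3 : ∀ᶠ x in atTop, rtail Y (a x) ≤ δ * T x := by
    filter_upwards [ha3.def hδ0] with x hx
    rwa [Real.norm_eq_abs, Real.norm_eq_abs, abs_of_nonneg (rtail_nonneg Y _),
      abs_of_nonneg (hT_nonneg x)] at hx
  -- the main eventual bound
  have hmain : ∀ᶠ x in atTop, T (v * x) / T x ≤ B := by
    filter_upwards [hE1, hE2, hE3, hax_pos, eventually_gt_atTop (0:ℝ),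
      hxa.eventually (eventually_ge_atTop t₀)] with x e1 e2 e3 hax hx0 hxa'
    have hTx_pos : 0 < T x := lt_of_lt_of_le (by nlinarith [hI_pos x]) e2
    -- split I (v * x)
    have hsplit : I (v * x) = (∫ y in Set.Ioc 0 (a x), h y * rtail X (v * x / y) ∂μ)
        + ∫ y in Set.Ioi (a x), h y * rtail X (v * x / y) ∂μ := by
      simp only [hIdef]
      rw [← Set.Ioc_union_Ioi_eq_Ioi hax.le,
        setIntegral_union Set.Ioc_disjoint_Ioi_same measurableSet_Ioi (hgint _ _) (hgint _ _)]
    have hpart1 : (∫ y in Set.Ioc 0 (a x), h y * rtail X (v * x / y) ∂μ) ≤ c' * I x := by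
      have step1 : (∫ y in Set.Ioc 0 (a x), h y * rtail X (v * x / y) ∂μ)
          ≤ ∫ y in Set.Ioc 0 (a x), c' * (h y * rtail X (x / y)) ∂μ := by
        apply setIntegral_mono_on (hgint _ _) ((hgint x _).const_mul c') measurableSet_Ioc
        intro y hy
        have hy0 : 0 < y := hy.1
        have hya : y ≤ a x := hy.2
        have htt : t₀ ≤ x / y :=
          le_trans hxa' (div_le_div_of_nonneg_left hx0.le hy0 hya)
        have := ht₀ (x / y) htt
        rw [mul_div_assoc]
        calc h y * rtail X (v * (x / y)) ≤ h y * (c' * rtail X (x / y)) :=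
              mul_le_mul_of_nonneg_left this (hhpos y).le
          _ = c' * (h y * rtail X (x / y)) := by ring
      have step2 : (∫ y in Set.Ioc 0 (a x), c' * (h y * rtail X (x / y)) ∂μ)
          = c' * ∫ y in Set.Ioc 0 (a x), h y * rtail X (x / y) ∂μ := by
        rw [integral_const_mul]
      have step3 : (∫ y in Set.Ioc 0 (a x), h y * rtail X (x / y) ∂μ) ≤ I x := by
        simp only [hIdef]
        apply setIntegral_mono_set (hgint x _)
          (Filter.Eventually.of_forall fun y => hg_nonneg x y)
        exact HasSubset.Subset.eventuallyLE Set.Ioc_subset_Ioi_self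
      calc (∫ y in Set.Ioc 0 (a x), h y * rtail X (v * x / y) ∂μ)
          ≤ c' * ∫ y in Set.Ioc 0 (a x), h y * rtail X (x / y) ∂μ := by rw [← step2]; exact step1
        _ ≤ c' * I x := mul_le_mul_of_nonneg_left step3 hc'pos.le
    have hpart2 : (∫ y in Set.Ioi (a x), h y * rtail X (v * x / y) ∂μ) ≤ K * rtail Y (a x) := by
      have : (∫ y in Set.Ioi (a x), h y * rtail X (v * x / y) ∂μ)
          ≤ ∫ _y in Set.Ioi (a x), K ∂μ := by
        apply setIntegral_mono_on (hgint _ _) (integrable_const K) measurableSet_Ioi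
        intro y _; exact hg_le _ y
      rw [setIntegral_const, smul_eq_mul, measureReal_def] at this
      rw [hrtailY (a x)]
      linarith [this]
    -- combine
    have hIv : I (v * x) ≤ c' * I x + K * (δ * T x) := by
      rw [hsplit]
      have := hpart2.trans (mul_le_mul_of_nonneg_left e3 hK0.le)
      linarith [hpart1]
    have hfinal : T (v * x) ≤ B * T x := by
      have h1 : T (v * x) ≤ (1 + ε) * (c' * I x + K * (δ * T x)) :=
        e1.trans (mul_le_mul_of_nonneg_left hIv (by linarith))
      have h2 : (1 + ε) * c' * I x ≤ B1 * T x := by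
        have : (1 + ε) * c' = B1 * (1 - ε) := by
          rw [hB1def, div_mul_cancel₀ _ (by linarith : (1:ℝ) - ε ≠ 0)]
        rw [this, mul_assoc]
        exact mul_le_mul_of_nonneg_left e2 hB1pos.le
      have h3 : (1 + ε) * (K * (δ * T x)) = (1 - B1) / 2 * T x := by
        rw [hδdef]; field_simp
      calc T (v * x) ≤ (1 + ε) * (c' * I x + K * (δ * T x)) := h1
        _ = (1 + ε) * c' * I x + (1 + ε) * (K * (δ * T x)) := by ring
        _ ≤ B1 * T x + (1 - B1) / 2 * T x := by rw [h3]; linarith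
        _ = B * T x := by rw [hBdef]; ring
    exact (div_le_iff₀ hTx_pos).mpr hfinal
  -- conclude
  have hcobdd : IsCoboundedUnder (· ≤ ·) atTop fun x => T (v * x) / T x := by
    exact isCoboundedUnder_le_of_le atTop (x := 0) fun x =>
      div_nonneg (hT_nonneg _) (hT_nonneg _)
  exact lt_of_le_of_lt (limsup_le_of_le hcobdd hmain) hBlt1
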